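/- With α̃ = sqrt(N1/D1 - N1/(σ²(1-ρ²))) and β̃ = N1ρ/(α̃(1-ρ²)σ²), the quantity α̃² + β̃² + 2α̃β̃ρ is at most P/σ² if and only if D1 ∈ [D1⁻, D1⁺], where D1^± = σ²((P+2N1)(1-ρ²) ± sqrt((P²-(P+2N1)²ρ²)(1-ρ²)))/(2(P+N1)). -/

import Mathlib

set_option maxHeartbeats 1000000

lemma quad_iff_aux (P N1 σ2 ρ D1 : ℝ) (hP : 0 < P) (hN1 : 0 < N1) (hσ : 0 < σ2)
    (hρ0 : 0 < ρ) (hρ1 : ρ < 1) (hPbig : 2 * ρ * N1 / (1 - ρ) ≤ P) :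
    (P + N1) * D1 ^ 2 - σ2 * (P + 2 * N1) * (1 - ρ ^ 2) * D1 + N1 * σ2 ^ 2 * (1 - ρ ^ 2) ≤ 0 ↔
      D1 ∈ Set.Icc
        (σ2 * ((P + 2 * N1) * (1 - ρ ^ 2) -
          Real.sqrt ((P ^ 2 - (P + 2 * N1) ^ 2 * ρ ^ 2) * (1 - ρ ^ 2))) / (2 * (P + N1)))
        (σ2 * ((P + 2 * N1) * (1 - ρ ^ 2) +
          Real.sqrt ((P ^ 2 - (P + 2 * N1) ^ 2 * ρ ^ 2) * (1 - ρ ^ 2))) / (2 * (P + N1))) := by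
  have hr : 0 < 1 - ρ ^ 2 := by nlinarith
  have hρP : (P + 2 * N1) * ρ ≤ P := by
    have h1 : 2 * ρ * N1 ≤ P * (1 - ρ) := by
      rw [div_le_iff₀ (by linarith : (0:ℝ) < 1 - ρ)] at hPbig; linarith
    nlinarith
  have hsq : 0 ≤ P ^ 2 - (P + 2 * N1) ^ 2 * ρ ^ 2 := by
    nlinarith [mul_pos (by linarith : (0:ℝ) < P + 2 * N1) hρ0, hρP]
  have hargnn : 0 ≤ (P ^ 2 - (P + 2 * N1) ^ 2 * ρ ^ 2) * (1 - ρ ^ 2) :=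
    mul_nonneg hsq hr.le
  set E : ℝ := Real.sqrt ((P ^ 2 - (P + 2 * N1) ^ 2 * ρ ^ 2) * (1 - ρ ^ 2)) with hEdef
  have hEnn : 0 ≤ E := Real.sqrt_nonneg _
  have hE2 : E ^ 2 = (P ^ 2 - (P + 2 * N1) ^ 2 * ρ ^ 2) * (1 - ρ ^ 2) :=
    Real.sq_sqrt hargnn
  clear_value E
  clear hEdef hargnn hsq hρP hPbig
  have hPN : (0:ℝ) < 2 * (P + N1) := by linarith
  have hkey : 4 * (P + N1) * ((P + N1) * D1 ^ 2 - σ2 * (P + 2 * N1) * (1 - ρ ^ 2) * D1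
        + N1 * σ2 ^ 2 * (1 - ρ ^ 2))
      = (2 * (P + N1) * D1 - σ2 * (P + 2 * N1) * (1 - ρ ^ 2)) ^ 2 - σ2 ^ 2 * E ^ 2 := by
    linear_combination (σ2 ^ 2) * hE2
  rw [Set.mem_Icc, div_le_iff₀ hPN, le_div_iff₀ hPN]
  constructor
  · intro h
    constructor
    · nlinarith [sq_nonneg (2 * (P + N1) * D1 - σ2 * (P + 2 * N1) * (1 - ρ ^ 2) + σ2 * E),
        mul_nonneg hσ.le hEnn, hkey, sq_nonneg E]
    · nlinarith [sq_nonneg (2 * (P + N1) * D1 - σ2 * (P + 2 * N1) * (1 - ρ ^ 2) - σ2 * E),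
        mul_nonneg hσ.le hEnn, hkey, sq_nonneg E]
  · rintro ⟨h1, h2⟩
    nlinarith [mul_nonneg
        (by nlinarith : (0:ℝ) ≤ 2 * (P + N1) * D1 - σ2 * (P + 2 * N1) * (1 - ρ ^ 2) + σ2 * E)
        (by nlinarith : (0:ℝ) ≤ σ2 * E - (2 * (P + N1) * D1 - σ2 * (P + 2 * N1) * (1 - ρ ^ 2))),
      hkey]

theorem stmt_5 (P N1 σ2 ρ D1 : ℝ) (hP : 0 < P) (hN1 : 0 < N1) (hσ : 0 < σ2)
    (hρ0 : 0 < ρ) (hρ1 : ρ < 1) (hPbig : 2 * ρ * N1 / (1 - ρ) ≤ P)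
    (hD1pos : 0 < D1) (hD1lt : D1 < (1 - ρ ^ 2) * σ2)
    (α β : ℝ)
    (hα : α = Real.sqrt (N1 / D1 - N1 / (σ2 * (1 - ρ ^ 2))))
    (hβ : β = N1 * ρ / (α * (1 - ρ ^ 2) * σ2)) :
    α ^ 2 + β ^ 2 + 2 * α * β * ρ ≤ P / σ2 ↔
      D1 ∈ Set.Icc
        (σ2 * ((P + 2 * N1) * (1 - ρ ^ 2) -
          Real.sqrt ((P ^ 2 - (P + 2 * N1) ^ 2 * ρ ^ 2) * (1 - ρ ^ 2))) / (2 * (P + N1)))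
        (σ2 * ((P + 2 * N1) * (1 - ρ ^ 2) +
          Real.sqrt ((P ^ 2 - (P + 2 * N1) ^ 2 * ρ ^ 2) * (1 - ρ ^ 2))) / (2 * (P + N1))) := by
  have hr : 0 < 1 - ρ ^ 2 := by nlinarith
  have hc : 0 < σ2 * (1 - ρ ^ 2) := by positivity
  have hApos : 0 < N1 / D1 - N1 / (σ2 * (1 - ρ ^ 2)) := by
    have h1 : N1 / (σ2 * (1 - ρ ^ 2)) < N1 / D1 := by
      apply div_lt_div_of_pos_left hN1 hD1pos
      nlinarith
    linarith
  have hαpos : 0 < α := by rw [hα]; exact Real.sqrt_pos.mpr hApos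
  have hαne : α ≠ 0 := ne_of_gt hαpos
  have hA2 : α ^ 2 = N1 / D1 - N1 / (σ2 * (1 - ρ ^ 2)) := by
    rw [hα]; exact Real.sq_sqrt hApos.le
  have hαβ : α * β = N1 * ρ / ((1 - ρ ^ 2) * σ2) := by
    rw [hβ]; field_simp
  set A : ℝ := N1 / D1 - N1 / (σ2 * (1 - ρ ^ 2)) with hAdef
  set k : ℝ := N1 * ρ / ((1 - ρ ^ 2) * σ2) with hkdef
  have step1 : α ^ 2 + β ^ 2 + 2 * α * β * ρ ≤ P / σ2 ↔
      A ^ 2 + k ^ 2 + 2 * A * k * ρ ≤ P / σ2 * A := by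
    rw [← mul_le_mul_iff_of_pos_right (show (0:ℝ) < α ^ 2 by positivity)]
    have e1 : (α ^ 2 + β ^ 2 + 2 * α * β * ρ) * α ^ 2
        = (α ^ 2) ^ 2 + (α * β) ^ 2 + 2 * (α ^ 2) * (α * β) * ρ := by ring
    rw [e1, hαβ, hA2]
  have step2 : A ^ 2 + k ^ 2 + 2 * A * k * ρ ≤ P / σ2 * A ↔
      (P + N1) * D1 ^ 2 - σ2 * (P + 2 * N1) * (1 - ρ ^ 2) * D1
        + N1 * σ2 ^ 2 * (1 - ρ ^ 2) ≤ 0 := by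
    have hiden : P / σ2 * A - (A ^ 2 + k ^ 2 + 2 * A * k * ρ)
        = -((P + N1) * D1 ^ 2 - σ2 * (P + 2 * N1) * (1 - ρ ^ 2) * D1
          + N1 * σ2 ^ 2 * (1 - ρ ^ 2)) * (N1 / (D1 ^ 2 * σ2 ^ 2 * (1 - ρ ^ 2))) := by
      rw [hAdef, hkdef]
      field_simp
      ring
    rw [← sub_nonneg, hiden,
      mul_nonneg_iff_of_pos_right
        (show (0:ℝ) < N1 / (D1 ^ 2 * σ2 ^ 2 * (1 - ρ ^ 2)) by positivity)]
    constructor <;> intro h <;> linarith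
  rw [step1, step2]
  exact quad_iff_aux P N1 σ2 ρ D1 hP hN1 hσ hρ0 hρ1 hPbig
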